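/- An external address s is exponentially bounded (i.e. t_s < ∞) if and only if there exists x ≥ 0 such that 2π|s_k| ≤ F^{k−1}(x) for all k ≥ 1, where F^{k−1} denotes the (k−1)-st iterate of F. -/

import Mathlib

open Filter Topology ENNReal

noncomputable section

/-- The space of external addresses: integer sequences (indexed from 0, so index `k`
corresponds to the entry `s_{k+1}` of the paper) with the lexicographic order. -/
abbrev Addr : Type := Lex (ℕ → ℤ)

/-- The shift map `σ` on external addresses. -/
def shiftA (s : Addr) : Addr := toLex (fun n => ofLex s (n + 1))

/-- The model growth function `F(t) = e^t - 1`. -/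
def Fexp (t : ℝ) : ℝ := Real.exp t - 1

/-- The model map `𝓕(s,t) = (σ s, F t - 2π |s₂|)`. -/
def Fmod (p : Addr × ℝ) : Addr × ℝ :=
  (shiftA p.1, Fexp p.2 - 2 * Real.pi * |((ofLex p.1 1 : ℤ) : ℝ)|)

/-- The model set `X̄ = {(s,t) : T(𝓕ⁿ(s,t)) ≥ 0 for all n ≥ 0}`. -/
def Xbar : Set (Addr × ℝ) := {p | ∀ n : ℕ, 0 ≤ (Fmod^[n] p).2}

/-- The model escaping set `X = {(s,t) ∈ X̄ : T(𝓕ⁿ(s,t)) → ∞}`. -/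
def Xset : Set (Addr × ℝ) :=
  {p | p ∈ Xbar ∧ Tendsto (fun n : ℕ => (Fmod^[n] p).2) atTop atTop}

/-- The minimal potential `t_s ∈ [0,∞]` of an address (`∞` if `(s,t) ∉ X̄` for all `t ≥ 0`). -/
def tS (s : Addr) : ℝ≥0∞ :=
  sInf (ENNReal.ofReal '' {t : ℝ | 0 ≤ t ∧ (s, t) ∈ Xbar})

/-- The exponential map `E_κ(z) = e^z + κ`. -/
def Eexp (κ : ℂ) (z : ℂ) : ℂ := Complex.exp z + κ

/-- The escaping set `I(E_κ)`. -/
def escapingSet (κ : ℂ) : Set ℂ :=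
  {z | Tendsto (fun n : ℕ => ‖(Eexp κ)^[n] z‖) atTop atTop}

/-- The order topology induced by the lexicographic order on external addresses. -/
instance : TopologicalSpace Addr := Preorder.topology Addr
instance : OrderTopology Addr := ⟨rfl⟩

lemma Fexp_mono : Monotone Fexp := fun a b h =>
  sub_le_sub_right (Real.exp_le_exp.2 h) 1

lemma Fexp_nonneg {x : ℝ} (hx : 0 ≤ x) : 0 ≤ Fexp x := by
  have := Real.add_one_le_exp x
  simp only [Fexp]; linarith

lemma Fexp_iter_nonneg {x : ℝ} (hx : 0 ≤ x) (n : ℕ) : 0 ≤ Fexp^[n] x := by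
  induction n with
  | zero => simpa
  | succ n ih => rw [Function.iterate_succ_apply']; exact Fexp_nonneg ih

lemma Fexp_iter_mono {x y : ℝ} (h : x ≤ y) (n : ℕ) : Fexp^[n] x ≤ Fexp^[n] y := by
  induction n with
  | zero => simpa
  | succ n ih => rw [Function.iterate_succ_apply', Function.iterate_succ_apply']
                 exact Fexp_mono ih

lemma Fmod_fst_apply (s : Addr) (t : ℝ) (n m : ℕ) :
    ofLex ((Fmod^[n] (s, t)).1) m = ofLex s (m + n) := by
  induction n generalizing m with
  | zero => rfl
  | succ n ih =>
    rw [Function.iterate_succ_apply']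
    show ofLex (shiftA (Fmod^[n] (s, t)).1) m = _
    simp only [shiftA, ofLex_toLex]
    rw [ih (m + 1)]
    have h : m + 1 + n = m + (n + 1) := by omega
    rw [h]

lemma Fmod_snd_succ (s : Addr) (t : ℝ) (n : ℕ) :
    (Fmod^[n + 1] (s, t)).2
      = Fexp ((Fmod^[n] (s, t)).2) - 2 * Real.pi * |((ofLex s (n + 1) : ℤ) : ℝ)| := by
  rw [Function.iterate_succ_apply']
  show Fexp ((Fmod^[n] (s, t)).2) - 2 * Real.pi * |((ofLex (Fmod^[n] (s, t)).1 1 : ℤ) : ℝ)| = _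
  rw [Fmod_fst_apply]
  norm_num [Nat.add_comm]

lemma Fexp_key {a : ℝ} (ha : 0 ≤ a) :
    Fexp a + 2 * Real.pi ≤ Fexp (a + 2 * Real.pi) - Fexp a := by
  have h1 : (1 : ℝ) ≤ Real.exp a := Real.one_le_exp ha
  have h2 : 2 * Real.pi + 1 ≤ Real.exp (2 * Real.pi) := by
    have := Real.add_one_le_exp (2 * Real.pi); linarith
  simp only [Fexp, Real.exp_add]
  have hπ := Real.pi_gt_three
  have h3 : 0 ≤ (Real.exp a - 1) * (2 * Real.pi - 1) :=
    mul_nonneg (by linarith) (by linarith)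
  nlinarith [mul_le_mul_of_nonneg_left h2 (by positivity : (0:ℝ) ≤ Real.exp a), h3]

/-- An external address `s` is exponentially bounded (`t_s < ∞`) iff there exists `x ≥ 0`
with `2π |s_k| ≤ F^{k-1}(x)` for all `k ≥ 1` (here the paper's `s_k` is `ofLex s (k-1)`). -/
theorem exponentially_bounded_iff (s : Addr) :
    tS s ≠ ⊤ ↔ ∃ x : ℝ, 0 ≤ x ∧ ∀ k : ℕ, 1 ≤ k →
      2 * Real.pi * |((ofLex s (k - 1) : ℤ) : ℝ)| ≤ Fexp^[k - 1] x := by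
  constructor
  · intro h
    rcases Set.eq_empty_or_nonempty {t : ℝ | 0 ≤ t ∧ (s, t) ∈ Xbar} with he | ⟨t, ht0, htX⟩
    · exfalso; apply h; simp [tS, he]
    · set x : ℝ := max t (2 * Real.pi * |((ofLex s 0 : ℤ) : ℝ)|) with hxdef
      have hx0 : 0 ≤ x := le_trans ht0 (le_max_left _ _)
      refine ⟨x, hx0, ?_⟩
      have hto : ∀ n : ℕ, (Fmod^[n] (s, t)).2 ≤ Fexp^[n] t := by
        intro n
        induction n with
        | zero => simp
        | succ n ih =>
          rw [Fmod_snd_succ, Function.iterate_succ_apply']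
          have hc : 0 ≤ 2 * Real.pi * |((ofLex s (n + 1) : ℤ) : ℝ)| := by positivity
          have := Fexp_mono ih
          linarith
      intro k hk
      rcases Nat.exists_eq_add_of_le hk with ⟨m, rfl⟩
      rcases m with _ | n
      · exact le_max_right t _
      · have hidx : 1 + (n + 1) - 1 = n + 1 := by omega
        rw [hidx]
        have h1 := htX (n + 1)
        rw [Fmod_snd_succ] at h1
        have h2 : Fexp ((Fmod^[n] (s, t)).2) ≤ Fexp^[n + 1] x := by
          rw [Function.iterate_succ_apply']
          exact Fexp_mono (le_trans (hto n) (Fexp_iter_mono (le_max_left _ _) n))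
        linarith
  · rintro ⟨x, hx0, hk⟩
    have hπ := Real.pi_pos
    set t : ℝ := x + 2 * Real.pi with htdef
    have hlow : ∀ n : ℕ, Fexp^[n] x + 2 * Real.pi ≤ (Fmod^[n] (s, t)).2 := by
      intro n
      induction n with
      | zero => simp [htdef]
      | succ n ih =>
        rw [Fmod_snd_succ]
        have hb : 2 * Real.pi * |((ofLex s (n + 1) : ℤ) : ℝ)| ≤ Fexp^[n + 1] x := by
          have := hk (n + 2) (by omega)
          simpa using this
        have h1 : Fexp (Fexp^[n] x + 2 * Real.pi) ≤ Fexp ((Fmod^[n] (s, t)).2) :=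
          Fexp_mono ih
        have h2 := Fexp_key (Fexp_iter_nonneg hx0 n)
        rw [Function.iterate_succ_apply'] at *
        linarith
    have hmem : (s, t) ∈ Xbar := by
      intro n
      have := hlow n
      have := Fexp_iter_nonneg hx0 n
      linarith
    have hle : tS s ≤ ENNReal.ofReal t :=
      sInf_le ⟨t, ⟨by positivity, hmem⟩, rfl⟩
    exact ne_top_of_le_ne_top ofReal_ne_top hle
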